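/- Let Λ(θ) = −(√(−2θ)/σ)·tanh(σ√(−2θ)/2)·S₀ for θ ≤ 0 with σ, S₀ > 0, and let I(K) = sup_{θ≤0} {θK − Λ(θ)} for K > 0. Then I(K)·K → S₀²/(2σ²) as K → 0⁺, i.e. I(K) ~ S₀²/(2σ²K) as K → 0. -/

import Mathlib

open Real Filter

lemma tanh_formula (x : ℝ) :
    Real.tanh x = (1 - Real.exp (-(2*x))) / (1 + Real.exp (-(2*x))) := by
  have h1 : Real.exp (-(2*x)) = Real.exp (-x) * Real.exp (-x) := by
    rw [← Real.exp_add]; ring_nf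
  have h2 : Real.exp x * Real.exp (-x) = 1 := by
    rw [← Real.exp_add]; simp
  have hc : Real.cosh x ≠ 0 := ne_of_gt (Real.cosh_pos x)
  rw [Real.tanh_eq_sinh_div_cosh, Real.sinh_eq, Real.cosh_eq] at *
  have hd : 0 < 1 + Real.exp (-(2*x)) := by positivity
  field_simp
  rw [show -(x*2) = -(2*x) by ring, h1]
  linear_combination (2 * Real.exp (-x)) * h2

lemma tanh_le_one' (x : ℝ) : Real.tanh x ≤ 1 := by
  rw [tanh_formula]
  have h : 0 < Real.exp (-(2*x)) := Real.exp_pos _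
  rw [div_le_one (by linarith)]
  linarith

lemma tendsto_tanh_atTop : Tendsto Real.tanh atTop (nhds 1) := by
  have hb : Tendsto (fun x : ℝ => -(2*x)) atTop atBot := by
    apply tendsto_neg_atBot_iff.mpr
    exact Tendsto.const_mul_atTop (by norm_num) tendsto_id
  have h : Tendsto (fun x : ℝ => Real.exp (-(2*x))) atTop (nhds 0) :=
    Real.tendsto_exp_atBot.comp hb
  have h2 : Tendsto (fun x : ℝ => (1 - Real.exp (-(2*x))) / (1 + Real.exp (-(2*x))))
      atTop (nhds ((1 - 0)/(1 + 0))) :=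
    ((tendsto_const_nhds (x := (1:ℝ))).sub h).div ((tendsto_const_nhds (x := (1:ℝ))).add h)
      (by norm_num)
  simp only [sub_zero, add_zero, div_one] at h2
  exact Tendsto.congr (fun x => (tanh_formula x).symm) h2

/-- The `θ ≤ 0` branch of the limiting cumulant generating function of the
time-averaged square-root process. -/
noncomputable def cumulantSqrtNeg (σ S₀ θ : ℝ) : ℝ :=
  -(Real.sqrt (-2 * θ) / σ) * Real.tanh (σ * Real.sqrt (-2 * θ) / 2) * S₀

/-- `I(K) = sup_{θ ≤ 0} {θK − Λ(θ)}`. -/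
noncomputable def rateFnNeg (σ S₀ K : ℝ) : ℝ :=
  sSup ((fun θ => θ * K - cumulantSqrtNeg σ S₀ θ) '' Set.Iic (0 : ℝ))

lemma rateFn_bound (σ S₀ : ℝ) (hσ : 0 < σ) (hS₀ : 0 < S₀) {K : ℝ} (hK : 0 < K)
    {θ : ℝ} (hθ : θ ≤ 0) :
    θ * K - cumulantSqrtNeg σ S₀ θ ≤ S₀ ^ 2 / (2 * σ ^ 2 * K) := by
  set x := Real.sqrt (-2 * θ) with hx
  have hx0 : 0 ≤ x := Real.sqrt_nonneg _
  have hxsq : x ^ 2 = -2 * θ := Real.sq_sqrt (by linarith)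
  have ht : Real.tanh (σ * x / 2) ≤ 1 := tanh_le_one' _
  have hθeq : θ = -(x ^ 2) / 2 := by linarith
  have key : θ * K + x / σ * S₀ ≤ S₀ ^ 2 / (2 * σ ^ 2 * K) := by
    have heq : S₀ ^ 2 / (2 * σ ^ 2 * K) - (θ * K + x / σ * S₀)
        = (σ * x * K - S₀) ^ 2 / (2 * σ ^ 2 * K) := by
      rw [hθeq]; field_simp; ring
    nlinarith [div_nonneg (sq_nonneg (σ * x * K - S₀)) (by positivity : (0:ℝ) ≤ 2 * σ ^ 2 * K)]
  have hmono : x / σ * Real.tanh (σ * x / 2) * S₀ ≤ x / σ * 1 * S₀ :=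
    mul_le_mul_of_nonneg_right (mul_le_mul_of_nonneg_left ht (by positivity)) hS₀.le
  unfold cumulantSqrtNeg
  rw [← hx]
  nlinarith [hmono, key]

theorem stmt7 (σ S₀ : ℝ) (hσ : 0 < σ) (hS₀ : 0 < S₀) :
    Tendsto (fun K => rateFnNeg σ S₀ K * K) (nhdsWithin 0 (Set.Ioi 0))
      (nhds (S₀ ^ 2 / (2 * σ ^ 2))) := by
  set c := S₀ ^ 2 / (2 * σ ^ 2) with hc
  set ℓ : ℝ → ℝ := fun K => -c + S₀ ^ 2 / σ ^ 2 * Real.tanh (S₀ / (2 * K)) with hℓ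
  have hupper : ∀ K ∈ Set.Ioi (0:ℝ), rateFnNeg σ S₀ K * K ≤ c := by
    intro K hK
    rw [Set.mem_Ioi] at hK
    have h1 : rateFnNeg σ S₀ K ≤ S₀ ^ 2 / (2 * σ ^ 2 * K) := by
      apply Real.sSup_le
      · rintro v ⟨θ, hθ, rfl⟩
        exact rateFn_bound σ S₀ hσ hS₀ hK hθ
      · positivity
    calc rateFnNeg σ S₀ K * K ≤ S₀ ^ 2 / (2 * σ ^ 2 * K) * K :=
          mul_le_mul_of_nonneg_right h1 hK.le
      _ = c := by
          rw [hc, div_mul_eq_mul_div, mul_comm (2 * σ ^ 2) K, ← mul_comm K (S₀ ^ 2),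
            mul_div_mul_left _ _ hK.ne']
  have hlower : ∀ K ∈ Set.Ioi (0:ℝ), ℓ K ≤ rateFnNeg σ S₀ K * K := by
    intro K hK
    rw [Set.mem_Ioi] at hK
    set θ₀ : ℝ := -(S₀ / (σ * K)) ^ 2 / 2 with hθ₀
    have hθ₀le : θ₀ ≤ 0 := by
      have := sq_nonneg (S₀ / (σ * K)); rw [hθ₀]; linarith
    have hbdd : BddAbove ((fun θ => θ * K - cumulantSqrtNeg σ S₀ θ) '' Set.Iic (0 : ℝ)) := by
      refine ⟨S₀ ^ 2 / (2 * σ ^ 2 * K), ?_⟩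
      rintro v ⟨θ, hθ, rfl⟩
      exact rateFn_bound σ S₀ hσ hS₀ hK hθ
    have hv : θ₀ * K - cumulantSqrtNeg σ S₀ θ₀ ≤ rateFnNeg σ S₀ K :=
      le_csSup hbdd ⟨θ₀, hθ₀le, rfl⟩
    have hsq : Real.sqrt (-2 * θ₀) = S₀ / (σ * K) := by
      rw [hθ₀, show -2 * (-(S₀ / (σ * K)) ^ 2 / 2) = (S₀ / (σ * K)) ^ 2 by ring,
        Real.sqrt_sq (by positivity)]
    have harg : σ * (S₀ / (σ * K)) / 2 = S₀ / (2 * K) := by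
      field_simp
    have hval : (θ₀ * K - cumulantSqrtNeg σ S₀ θ₀) * K = ℓ K := by
      unfold cumulantSqrtNeg
      rw [hsq, harg, hθ₀, hℓ, hc]
      field_simp
      ring
    calc ℓ K = (θ₀ * K - cumulantSqrtNeg σ S₀ θ₀) * K := hval.symm
      _ ≤ rateFnNeg σ S₀ K * K := mul_le_mul_of_nonneg_right hv hK.le
  have hℓtend : Tendsto ℓ (nhdsWithin 0 (Set.Ioi 0)) (nhds c) := by
    have h1 : Tendsto (fun K : ℝ => K⁻¹) (nhdsWithin 0 (Set.Ioi 0)) atTop :=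
      tendsto_inv_nhdsGT_zero
    have h2 : Tendsto (fun K : ℝ => S₀ / (2 * K)) (nhdsWithin 0 (Set.Ioi 0)) atTop := by
      have := Tendsto.const_mul_atTop (show (0:ℝ) < S₀ / 2 by positivity) h1
      refine this.congr fun K => ?_
      rw [← div_eq_mul_inv, div_div]
    have h3 : Tendsto (fun K : ℝ => Real.tanh (S₀ / (2 * K)))
        (nhdsWithin 0 (Set.Ioi 0)) (nhds 1) := tendsto_tanh_atTop.comp h2
    have h4 := (tendsto_const_nhds (x := -c)).add (h3.const_mul (S₀ ^ 2 / σ ^ 2))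
    have heq : -c + S₀ ^ 2 / σ ^ 2 * 1 = c := by
      rw [hc]; field_simp; ring
    rw [heq] at h4
    exact h4
  refine tendsto_of_tendsto_of_tendsto_of_le_of_le' hℓtend tendsto_const_nhds ?_ ?_
  · exact eventually_mem_nhdsWithin.mono hlower
  · exact eventually_mem_nhdsWithin.mono hupper
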